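/- Let q be a power of an odd prime with q ≡ 1 (mod 3), let φ be the quadratic character of F_q and χ₃ a character of order 3. Let a_q := -Σ_{x∈F_q} φ((x-1)(x²+1/3)). Then -φ(-2)·a_q/q = 2·Re(C(χ₃,φ)), where C(A,B) = B(-1)·J(A,B̄)/q is Greene's binomial coefficient. -/

import Mathlib

/-- The Jacobi sum of two multiplicative characters. -/
noncomputable def jacSum {F : Type*} [Field F] [Fintype F] (A B : MulChar F ℂ) : ℂ :=
  ∑ x : F, A x * B (1 - x)

/-- Greene's binomial coefficient `C(A,B) = B(-1)/q · J(A, B⁻¹)`. -/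
noncomputable def greeneBinom {F : Type*} [Field F] [Fintype F] (A B : MulChar F ℂ) : ℂ :=
  B (-1) / (Fintype.card F : ℂ) * jacSum A B⁻¹

open Finset

set_option linter.unusedSectionVars false

section Aux
variable {F : Type*} [Field F] [Fintype F] [DecidableEq F]

lemma aux_char_prime [Nontrivial F] : Nat.Prime (ringChar F) := by
  have : CharP F (ringChar F) := ringChar.charP F
  exact CharP.char_is_prime F (ringChar F)

lemma aux_two_ne_zero (hodd : Odd (Fintype.card F)) : (2 : F) ≠ 0 := by
  intro h
  have hdvd : ringChar F ∣ 2 := by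
    rw [← CharP.cast_eq_zero_iff F (ringChar F) 2]; exact_mod_cast h
  have hp := aux_char_prime (F := F)
  have h2 : ringChar F = 2 := (Nat.prime_dvd_prime_iff_eq hp Nat.prime_two).mp hdvd
  have := FiniteField.even_card_iff_char_two.mp h2
  have := Nat.odd_iff.mp hodd
  omega

lemma aux_three_ne_zero (hq : Fintype.card F % 3 = 1) : (3 : F) ≠ 0 := by
  intro h
  have hdvd : ringChar F ∣ 3 := by
    rw [← CharP.cast_eq_zero_iff F (ringChar F) 3]; exact_mod_cast h
  have hp := aux_char_prime (F := F)
  have h3 : ringChar F = 3 := (Nat.prime_dvd_prime_iff_eq hp Nat.prime_three).mp hdvd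
  have hcard : ringChar F ∣ Fintype.card F := by
    rw [← CharP.cast_eq_zero_iff F (ringChar F)]
    exact FiniteField.cast_card_eq_zero F
  rw [h3] at hcard
  omega


lemma aux_omega (hq : Fintype.card F % 3 = 1) :
    ∃ ω : F, ω ≠ 1 ∧ ω ^ 3 = 1 ∧ ω ^ 2 + ω + 1 = 0 := by
  have h3dvd : 3 ∣ Fintype.card Fˣ := by
    rw [Fintype.card_units]
    have := Fintype.card_pos (α := F)
    omega
  haveI : Fact (Nat.Prime 3) := ⟨Nat.prime_three⟩
  obtain ⟨ζ, hζ⟩ := exists_prime_orderOf_dvd_card (G := Fˣ) 3 h3dvd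
  refine ⟨(ζ : F), ?_, ?_, ?_⟩
  · intro h
    have : ζ = 1 := Units.ext h
    rw [this, orderOf_one] at hζ; norm_num at hζ
  · have h : ζ ^ 3 = 1 := by rw [← hζ]; exact pow_orderOf_eq_one ζ
    have := congrArg (Units.val) h; push_cast at this; exact this
  · have h3 : (ζ : F) ^ 3 = 1 := by
      have h : ζ ^ 3 = 1 := by rw [← hζ]; exact pow_orderOf_eq_one ζ
      have := congrArg (Units.val) h; push_cast at this; exact this
    have h1 : (ζ : F) ≠ 1 := by
      intro h
      have : ζ = 1 := Units.ext h
      rw [this, orderOf_one] at hζ; norm_num at hζ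
    have hz : ((ζ : F) - 1) * ((ζ : F) ^ 2 + (ζ : F) + 1) = 0 := by linear_combination h3
    rcases mul_eq_zero.mp hz with h' | h'
    · exact absurd (by linear_combination h') h1
    · exact h'

lemma aux_chi_cube (χ₃ : MulChar F ℂ) (hχ₃ : orderOf χ₃ = 3) {a : F} (ha : a ≠ 0) :
    (χ₃ a) ^ 3 = 1 := by
  have h1 : χ₃ ^ 3 = 1 := by rw [← hχ₃]; exact pow_orderOf_eq_one χ₃
  rw [← MulChar.pow_apply' χ₃ (by norm_num) a, h1]
  exact MulChar.one_apply_coe (Units.mk0 a ha)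

lemma aux_ker (χ₃ : MulChar F ℂ) (hχ₃ : orderOf χ₃ = 3) {x : F} (hx : x ≠ 0)
    (hx1 : χ₃ x = 1) : ∃ y : F, y ≠ 0 ∧ y ^ 3 = x := by
  obtain ⟨g, hg⟩ := IsCyclic.exists_generator (α := Fˣ)
  have hg1 : χ₃ (g : F) ≠ 1 := by
    intro h
    have hone : χ₃ = 1 := by
      apply MulChar.ext
      intro u
      obtain ⟨n, hn⟩ := mem_powers_iff_mem_zpowers.mpr (hg u)
      rw [MulChar.one_apply_coe, ← hn]
      push_cast
      rw [map_pow, h, one_pow]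
    rw [hone, orderOf_one] at hχ₃; norm_num at hχ₃
  have hgo : orderOf (χ₃ (g : F)) = 3 := by
    have hd : orderOf (χ₃ (g : F)) ∣ 3 :=
      orderOf_dvd_of_pow_eq_one (aux_chi_cube χ₃ hχ₃ (Units.ne_zero g))
    rcases (Nat.prime_three).eq_one_or_self_of_dvd _ hd with h | h
    · exact absurd (orderOf_eq_one_iff.mp h) hg1
    · exact h
  obtain ⟨n, hn⟩ := mem_powers_iff_mem_zpowers.mpr (hg (Units.mk0 x hx))
  have hxg : (g : F) ^ n = x := by
    have := congrArg (Units.val) hn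
    push_cast at this
    simpa using this
  have hpow : (χ₃ (g : F)) ^ n = 1 := by rw [← map_pow, hxg, hx1]
  have h3n : 3 ∣ n := hgo ▸ orderOf_dvd_of_pow_eq_one hpow
  obtain ⟨m, rfl⟩ := h3n
  exact ⟨(g : F) ^ m, pow_ne_zero m (Units.ne_zero g), by rw [← pow_mul, Nat.mul_comm m 3]; exact hxg⟩


lemma aux_count (hq : Fintype.card F % 3 = 1) (χ₃ : MulChar F ℂ) (hχ₃ : orderOf χ₃ = 3)
    (x : F) :
    (((univ.filter (fun z : F => z ^ 3 = x)).card : ℕ) : ℂ) = 1 + χ₃ x + (χ₃ x) ^ 2 := by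
  have h3F : (3 : F) ≠ 0 := aux_three_ne_zero hq
  rcases eq_or_ne x 0 with rfl | hx
  · have hset : univ.filter (fun z : F => z ^ 3 = (0:F)) = {0} := by
      ext z; simp [pow_eq_zero_iff]
    rw [hset]
    rw [χ₃.map_nonunit (by simp)]
    simp
  · by_cases hcube : ∃ y : F, y ≠ 0 ∧ y ^ 3 = x
    · obtain ⟨y, hy0, rfl⟩ := hcube
      obtain ⟨ω, hω1, hω3, hωs⟩ : ∃ ω : F, ω ≠ 1 ∧ ω ^ 3 = 1 ∧ ω ^ 2 + ω + 1 = 0 := aux_omega hq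
      have hω0 : ω ≠ 0 := by
        intro h; rw [h] at hω3; norm_num at hω3
      have hωsq1 : ω ^ 2 ≠ 1 := by
        intro h
        have : ω = 1 := by
          calc ω = ω * ω ^ 2 := by rw [h, mul_one]
          _ = ω ^ 3 := by ring
          _ = 1 := hω3
        exact hω1 this
      have hωω2 : ω ≠ ω ^ 2 := by
        intro h
        have : ω * (ω - 1) = 0 := by linear_combination -h
        rcases mul_eq_zero.mp this with h' | h'
        · exact hω0 h'
        · exact hω1 (by linear_combination h')
      have hset : univ.filter (fun z : F => z ^ 3 = y ^ 3) = {y, y * ω, y * ω ^ 2} := by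
        ext z
        simp only [mem_filter, mem_univ, true_and, mem_insert, mem_singleton]
        constructor
        · intro hz
          have hzy : (z * y⁻¹) ^ 3 = 1 := by
            field_simp
            exact hz
          have hfac : (z * y⁻¹ - 1) * (z * y⁻¹ - ω) * (z * y⁻¹ - ω ^ 2) = 0 := by
            linear_combination hzy + (z * y⁻¹ - (z * y⁻¹) ^ 2) * hωs + (z * y⁻¹ - 1) * hω3
          have hy' : y ≠ 0 := hy0
          rcases mul_eq_zero.mp hfac with h | h
          · rcases mul_eq_zero.mp h with h' | h'
            · left
              have : z * y⁻¹ = 1 := by linear_combination h'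
              field_simp at this; exact this
            · right; left
              have : z * y⁻¹ = ω := by linear_combination h'
              field_simp at this
              rw [this, mul_comm]
          · right; right
            have : z * y⁻¹ = ω ^ 2 := by linear_combination h
            field_simp at this
            rw [this, mul_comm]
        · rintro (rfl | rfl | rfl)
          · rfl
          · ring_nf
            linear_combination y ^ 3 * hω3
          · ring_nf
            linear_combination y ^ 3 * (ω ^ 3 + 1) * hω3
      rw [hset]
      have hcard : ({y, y * ω, y * ω ^ 2} : Finset F).card = 3 := by
        rw [Finset.card_insert_of_notMem, Finset.card_insert_of_notMem, Finset.card_singleton]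
        · simp only [mem_singleton]
          intro h
          exact hωω2 (mul_left_cancel₀ hy0 h)
        · simp only [mem_insert, mem_singleton]
          push_neg
          refine ⟨fun h => hω1 ?_, fun h => hωsq1 ?_⟩
          · exact (mul_left_cancel₀ hy0 (by rw [mul_one]; exact h)).symm
          · exact (mul_left_cancel₀ hy0 (by rw [mul_one]; exact h)).symm
      rw [hcard]
      have hval : χ₃ (y ^ 3) = 1 := by
        rw [map_pow]
        exact aux_chi_cube χ₃ hχ₃ hy0
      rw [hval]
      norm_num
    · have hset : univ.filter (fun z : F => z ^ 3 = x) = ∅ := by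
        ext z
        simp only [mem_filter, mem_univ, true_and, Finset.notMem_empty, iff_false]
        intro hz
        rcases eq_or_ne z 0 with rfl | hz0
        · rw [← hz] at hx; simp at hx
        · exact hcube ⟨z, hz0, hz⟩
      have ht : χ₃ x ≠ 1 := by
        intro h
        exact hcube (aux_ker χ₃ hχ₃ hx h)
      have ht3 : (χ₃ x) ^ 3 = 1 := aux_chi_cube χ₃ hχ₃ hx
      have hzero : 1 + χ₃ x + (χ₃ x) ^ 2 = 0 := by
        have h0 : (χ₃ x - 1) * (1 + χ₃ x + (χ₃ x) ^ 2) = 0 := by linear_combination ht3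
        rcases mul_eq_zero.mp h0 with h | h
        · exact absurd (by linear_combination h) ht
        · exact h
      rw [hset, hzero]
      simp


end Aux

/-- McCarthy's result: `-φ(-2)·a_q/q = 2·Re C(χ₃,φ)` where
`a_q = -Σ_x φ((x-1)(x²+1/3))`. -/
theorem stmt5 (F : Type*) [Field F] [Fintype F] [DecidableEq F]
    (hodd : Odd (Fintype.card F)) (hq : Fintype.card F % 3 = 1)
    (χ₃ : MulChar F ℂ) (hχ₃ : orderOf χ₃ = 3) :
    let φ : MulChar F ℂ := (quadraticChar F).ringHomComp (Int.castRingHom ℂ);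
    let aq : ℂ := -∑ x : F, φ ((x - 1) * (x ^ 2 + (3 : F)⁻¹));
    -φ (-2) * aq / (Fintype.card F : ℂ) = 2 * ((greeneBinom χ₃ φ).re : ℂ) := by
  intro φ aq
  have h2F : (2 : F) ≠ 0 := aux_two_ne_zero hodd
  have h3F : (3 : F) ≠ 0 := aux_three_ne_zero hq
  have h4F : (4 : F) ≠ 0 := by
    intro h; apply h2F
    have h4 : (2 : F) * 2 = 0 := by norm_num at h ⊢; exact_mod_cast h
    rcases mul_eq_zero.mp h4 with h' | h' <;> exact h'
  have h8F : (8 : F) ≠ 0 := by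
    intro h; apply h2F
    have h8 : (2 : F) * (2 * 2) = 0 := by norm_num at h ⊢; exact_mod_cast h
    rcases mul_eq_zero.mp h8 with h' | h'
    · exact h'
    · rcases mul_eq_zero.mp h' with h'' | h'' <;> exact h''
  obtain ⟨ω, hω1, hω3, hωs⟩ := aux_omega hq
  have hchar2 : ringChar F ≠ 2 := by
    intro h
    have h1 := FiniteField.even_card_iff_char_two.mp h
    have h2 := Nat.odd_iff.mp hodd
    omega
  have hφ_def : ∀ a : F, φ a = ((quadraticChar F a : ℤ) : ℂ) := fun a => rfl
  have hφsq : ∀ a : F, a ≠ 0 → φ a * φ a = 1 := by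
    intro a ha
    rw [hφ_def, ← Int.cast_mul, ← sq, quadraticChar_sq_one ha, Int.cast_one]
  have hφconj : ∀ a : F, (starRingEnd ℂ) (φ a) = φ a := by
    intro a
    rw [hφ_def]
    exact map_intCast _ _
  have hχconj : ∀ x : F, (starRingEnd ℂ) (χ₃ x) = (χ₃ x) ^ 2 := by
    intro x
    rcases eq_or_ne x 0 with rfl | hx
    · rw [χ₃.map_nonunit (by simp)]; simp
    · have h3 := aux_chi_cube χ₃ hχ₃ hx
      have ht0 : χ₃ x ≠ 0 := by
        intro h; rw [h] at h3; norm_num at h3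
      have hns : Complex.normSq (χ₃ x) = 1 := by
        have h := congrArg Complex.normSq h3
        rw [map_pow, map_one] at h
        have h0 : (0:ℝ) ≤ Complex.normSq (χ₃ x) := Complex.normSq_nonneg _
        set a : ℝ := Complex.normSq (χ₃ x) with ha
        have hfac : (a - 1) * (a ^ 2 + a + 1) = 0 := by linear_combination h
        have hpos : a ^ 2 + a + 1 > 0 := by nlinarith
        rcases mul_eq_zero.mp hfac with h' | h'
        · linarith [h']
        · exact absurd h' hpos.ne'
      have hmc : χ₃ x * (starRingEnd ℂ) (χ₃ x) = 1 := by
        rw [Complex.mul_conj, hns, Complex.ofReal_one]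
      apply mul_left_cancel₀ ht0
      rw [hmc]
      linear_combination -h3
  have hφinv : φ⁻¹ = φ := ((quadraticChar_isQuadratic F).comp (Int.castRingHom ℂ)).inv
  have hgb : greeneBinom χ₃ φ
      = φ (-1) / (Fintype.card F : ℂ) * ∑ x : F, χ₃ x * φ (1 - x) := by
    rw [greeneBinom, hφinv, jacSum]
  have hconjgb : (starRingEnd ℂ) (greeneBinom χ₃ φ)
      = φ (-1) / (Fintype.card F : ℂ) * ∑ x : F, (χ₃ x) ^ 2 * φ (1 - x) := by
    rw [hgb, map_mul, map_div₀, map_natCast, hφconj]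
    congr 1
    rw [map_sum]
    refine Finset.sum_congr rfl fun x _ => ?_
    rw [map_mul, hχconj, hφconj]
  have hA : ∑ z : F, φ (1 - z ^ 3) = ∑ x : F, (1 + χ₃ x + (χ₃ x) ^ 2) * φ (1 - x) := by
    rw [← Finset.sum_fiberwise univ (fun z : F => z ^ 3) (fun z : F => φ (1 - z ^ 3))]
    refine Finset.sum_congr rfl fun x _ => ?_
    calc ∑ z ∈ univ.filter (fun z : F => z ^ 3 = x), φ (1 - z ^ 3)
        = ∑ z ∈ univ.filter (fun z : F => z ^ 3 = x), φ (1 - x) :=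
          Finset.sum_congr rfl fun z hz => by rw [(Finset.mem_filter.mp hz).2]
      _ = ((univ.filter (fun z : F => z ^ 3 = x)).card : ℂ) * φ (1 - x) := by
          rw [Finset.sum_const, nsmul_eq_mul]
      _ = (1 + χ₃ x + (χ₃ x) ^ 2) * φ (1 - x) := by rw [aux_count hq χ₃ hχ₃ x]
  have hB : ∑ x : F, φ (1 - x) = 0 := by
    have h1 : ∑ x : F, φ (1 - x) = ∑ y : F, φ y :=
      Fintype.sum_equiv (Equiv.subLeft (1 : F)) _ _ (fun x => rfl)
    have h2 : ∑ y : F, φ y = ((∑ y : F, quadraticChar F y : ℤ) : ℂ) := by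
      rw [Int.cast_sum]
      exact Finset.sum_congr rfl fun y _ => hφ_def y
    rw [h1, h2, quadraticChar_sum_zero hchar2, Int.cast_zero]
  let e : F ≃ F :=
    { toFun := fun t => (3 * t - 1) / 2
      invFun := fun z => (2 * z + 1) / 3
      left_inv := fun t => by field_simp; ring
      right_inv := fun z => by field_simp; ring }
  have hC : ∑ z : F, φ (1 - z ^ 3)
      = φ ((-27 : F) / 8) * ∑ x : F, φ ((x - 1) * (x ^ 2 + (3 : F)⁻¹)) := by
    rw [Finset.mul_sum]
    refine (Fintype.sum_equiv e
      (fun t : F => φ ((-27 : F) / 8) * φ ((t - 1) * (t ^ 2 + (3 : F)⁻¹)))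
      (fun z : F => φ (1 - z ^ 3)) ?_).symm
    intro t
    show φ ((-27 : F) / 8) * φ ((t - 1) * (t ^ 2 + (3 : F)⁻¹)) = φ (1 - ((3 * t - 1) / 2) ^ 3)
    rw [← map_mul]
    show φ ((-27 : F) / 8 * ((t - 1) * (t ^ 2 + (3 : F)⁻¹))) = φ (1 - ((3 * t - 1) / 2) ^ 3)
    congr 1
    field_simp
    ring
  have hω21 : (2 * ω + 1 : F) ≠ 0 := by
    intro h0
    exact h3F (by linear_combination 4 * hωs - (2 * ω + 1) * h0)
  have hsq : (2 * ω + 1 : F) ^ 2 = -3 := by linear_combination 4 * hωs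
  have hu0 : (3 * (2 * ω + 1) / 4 : F) ≠ 0 := div_ne_zero (mul_ne_zero h3F hω21) h4F
  have hval : ((-27 : F) / 8) = 2 * ((3 * (2 * ω + 1) / 4) * (3 * (2 * ω + 1) / 4)) := by
    field_simp
    linear_combination (144 : F) * hsq - 1152 * hωs
  have hD : φ ((-27 : F) / 8) = φ 2 := by
    rw [hval, map_mul, map_mul, hφsq _ hu0, mul_one]
  have hsplit : ∑ x : F, (1 + χ₃ x + (χ₃ x) ^ 2) * φ (1 - x)
      = ∑ x : F, φ (1 - x)
        + (∑ x : F, χ₃ x * φ (1 - x) + ∑ x : F, (χ₃ x) ^ 2 * φ (1 - x)) := by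
    rw [← Finset.sum_add_distrib, ← Finset.sum_add_distrib]
    refine Finset.sum_congr rfl fun x _ => by ring
  have hjac2 : ∑ x : F, χ₃ x * φ (1 - x) + ∑ x : F, (χ₃ x) ^ 2 * φ (1 - x)
      = φ 2 * ∑ x : F, φ ((x - 1) * (x ^ 2 + (3 : F)⁻¹)) := by
    rw [← hD, ← hC, hA, hsplit, hB, zero_add]
  have h2re : (2 : ℂ) * ((greeneBinom χ₃ φ).re : ℂ)
      = greeneBinom χ₃ φ + (starRingEnd ℂ) (greeneBinom χ₃ φ) := by
    rw [Complex.add_conj]; push_cast; ring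
  rw [h2re, hconjgb, hgb, ← mul_add, hjac2]
  show -φ (-2) * (-∑ x : F, φ ((x - 1) * (x ^ 2 + (3 : F)⁻¹))) / (Fintype.card F : ℂ) = _
  have hm : φ (-2 : F) = φ (-1 : F) * φ (2 : F) := by
    rw [← map_mul]; norm_num
  rw [hm]
  ring
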